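/- Let P be a two-orbit n-polytope in class 2_I with base flag Φ, and for i ∈ I let ρ_i ∈ Γ(P) be the unique automorphism with Φρ_i = Φ^i, for j,k ∉ I let α_{j,k} be the unique automorphism with Φα_{j,k} = Φ^{j,k}, and for i ∈ I, j ∉ I let α_{j,i,j} be the unique automorphism with Φα_{j,i,j} = Φ^{j,i,j}. Then Γ(P) is generated by the set G_I = {ρ_i : i ∈ I} ∪ {α_{j,k} : j,k ∉ I} ∪ {α_{j,i,j} : i ∈ I, j ∉ I}. -/

import Mathlib

/-- An abstract polytope of rank `n`, presented by a partially ordered type of faces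
with a strictly monotone rank function onto `{-1, 0, ..., n}`, such that every flag
(maximal chain) has exactly one face of each rank (`faceAt`), every flag has a unique
`i`-adjacent flag for each `i = 0, ..., n-1` (the diamond condition, via `adj`), and
which is strongly flag-connected. -/
structure AbstractPolytope (n : ℕ) (Face : Type*) [PartialOrder Face] where
  rank : Face → ℤ
  rank_strictMono : ∀ {F G : Face}, F < G → rank F < rank G
  rank_le : ∀ F : Face, -1 ≤ rank F ∧ rank F ≤ (n : ℤ)
  /-- the unique face of rank `i` in the flag `Φ`, for `-1 ≤ i ≤ n` -/
  faceAt : Flag Face → ℤ → Face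
  faceAt_mem : ∀ (Φ : Flag Face) (i : ℤ), -1 ≤ i → i ≤ (n : ℤ) → faceAt Φ i ∈ Φ
  faceAt_rank : ∀ (Φ : Flag Face) (i : ℤ), -1 ≤ i → i ≤ (n : ℤ) → rank (faceAt Φ i) = i
  faceAt_eq : ∀ (Φ : Flag Face) (F : Face), F ∈ Φ → faceAt Φ (rank F) = F
  /-- the unique `i`-adjacent flag of `Φ`, for `0 ≤ i ≤ n-1` -/
  adj : Flag Face → ℕ → Flag Face
  adj_ne : ∀ (Φ : Flag Face) (i : ℕ), i < n → adj Φ i ≠ Φ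
  adj_mem : ∀ (Φ : Flag Face) (i : ℕ), i < n →
    ∀ F ∈ Φ, rank F ≠ (i : ℤ) → F ∈ adj Φ i
  adj_unique : ∀ (Φ Ψ : Flag Face) (i : ℕ), i < n → Ψ ≠ Φ →
    (∀ F ∈ Φ, rank F ≠ (i : ℤ) → F ∈ Ψ) → Ψ = adj Φ i
  /-- strong flag-connectedness: any two flags are joined by a sequence of successively
  adjacent flags, with all adjacencies at ranks not occurring among their common faces -/
  connected : ∀ Φ Ψ : Flag Face, ∃ (l : ℕ) (c : ℕ → Flag Face), c 0 = Φ ∧ c l = Ψ ∧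
    ∀ m < l, ∃ i : ℕ, i < n ∧ c (m + 1) = adj (c m) i ∧
      ∀ F : Face, F ∈ Φ → F ∈ Ψ → rank F ≠ (i : ℤ)

namespace AbstractPolytope

variable {n : ℕ} {Face : Type*} [PartialOrder Face]

/-- The automorphism group `Γ(P)`: order automorphisms of the set of faces.
It acts on flags via `Flag.map`; `g • Φ` denotes the image flag. -/
instance : MulAction (Face ≃o Face) (Flag Face) where
  smul g Φ := Flag.map g Φ
  one_smul Φ := by
    show Flag.map 1 Φ = Φ
    ext x
    simp [Flag.map, Flag.ofIsMaxChain]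
  mul_smul g h Φ := by
    show Flag.map (g * h) Φ = Flag.map g (Flag.map h Φ)
    ext x
    simp [Flag.map, Flag.ofIsMaxChain, Set.image_image]

lemma smul_flag_def (g : Face ≃o Face) (Φ : Flag Face) : g • Φ = Flag.map g Φ := rfl

/-- Two flags lie in the same orbit under the automorphism group. -/
def SameOrbit (Φ Ψ : Flag Face) : Prop := ∃ g : Face ≃o Face, g • Φ = Ψ

/-- The polytope has exactly two orbits on flags. -/
def TwoOrbit (_A : AbstractPolytope n Face) : Prop :=
  ∃ Φ Ψ : Flag Face, ¬ SameOrbit Φ Ψ ∧ ∀ X : Flag Face, SameOrbit X Φ ∨ SameOrbit X Ψ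

/-- `I` is the class type set of the two-orbit polytope `A`: it consists precisely of
those ranks `i ∈ {0,...,n-1}` such that every flag and its `i`-adjacent flag lie in the
same orbit; that is, `A` is in the class `2_I`. -/
def InClass (A : AbstractPolytope n Face) (I : Set ℕ) : Prop :=
  (∀ i ∈ I, i < n) ∧ ∀ i : ℕ, i < n → (i ∈ I ↔ ∀ Φ : Flag Face, SameOrbit Φ (A.adj Φ i))

/-- The stabilizer in the automorphism group of a face `F`. -/
def faceStab (_A : AbstractPolytope n Face) (F : Face) : Subgroup (Face ≃o Face) where
  carrier := {g : Face ≃o Face | g F = F}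
  one_mem' := rfl
  mul_mem' := by
    intro a b ha hb
    show (a * b) F = F
    rw [RelIso.mul_apply]
    rw [show b F = F from hb, show a F = F from ha]
  inv_mem' := by
    intro a ha
    show a⁻¹ F = F
    conv_lhs => rw [← show a F = F from ha]
    exact a.symm_apply_apply F

lemma mem_faceStab {A : AbstractPolytope n Face} {F : Face} {g : Face ≃o Face} :
    g ∈ A.faceStab F ↔ g F = F := Iff.rfl

end AbstractPolytope

namespace AbstractPolytope

variable {n : ℕ} {Face : Type*} [PartialOrder Face]

lemma mem_smul_iff {g : Face ≃o Face} {Φ : Flag Face} {F : Face} :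
    F ∈ g • Φ ↔ ∃ F' ∈ Φ, g F' = F := by
  rw [smul_flag_def, ← Flag.mem_coe_iff, Flag.coe_map]
  exact Set.mem_image _ _ _

lemma smul_mem_smul {g : Face ≃o Face} {Φ : Flag Face} {F : Face} (hF : F ∈ Φ) :
    g F ∈ g • Φ :=
  mem_smul_iff.2 ⟨F, hF, rfl⟩

/-- A strictly increasing self-map of `[-1, n]` dominates the identity. -/
lemma le_of_strictMono_interval (s : ℤ → ℤ)
    (hlb : ∀ r, -1 ≤ r → r ≤ (n : ℤ) → -1 ≤ s r)
    (hmono : ∀ r, -1 ≤ r → r < (n : ℤ) → s r < s (r + 1)) :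
    ∀ r, -1 ≤ r → r ≤ (n : ℤ) → r ≤ s r := by
  intro r hr
  refine Int.le_induction (motive := fun r _ => r ≤ (n : ℤ) → r ≤ s r)
    (fun h => hlb _ le_rfl h) (fun r hr ih h => ?_) r hr
  have h1 : r ≤ s r := ih (by omega)
  have h2 : s r < s (r + 1) := hmono r hr (by omega)
  omega

variable (A : AbstractPolytope n Face)

lemma faceAt_lt {Φ : Flag Face} {r r' : ℤ} (h1 : -1 ≤ r) (h2 : r < r') (h3 : r' ≤ (n : ℤ)) :
    A.faceAt Φ r < A.faceAt Φ r' := by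
  have hm : A.faceAt Φ r ∈ Φ := A.faceAt_mem Φ r h1 (by omega)
  have hm' : A.faceAt Φ r' ∈ Φ := A.faceAt_mem Φ r' (by omega) h3
  have hr : A.rank (A.faceAt Φ r) = r := A.faceAt_rank Φ r h1 (by omega)
  have hr' : A.rank (A.faceAt Φ r') = r' := A.faceAt_rank Φ r' (by omega) h3
  rcases Φ.le_or_le hm hm' with hle | hle
  · refine lt_of_le_of_ne hle fun he => ?_
    rw [he, hr'] at hr; omega
  · rcases eq_or_lt_of_le hle with he | hlt
    · rw [← he, hr'] at hr; omega
    · have := A.rank_strictMono hlt; omega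

lemma rank_apply_faceAt_ge (g : Face ≃o Face) (Φ : Flag Face) :
    ∀ r, -1 ≤ r → r ≤ (n : ℤ) → r ≤ A.rank (g (A.faceAt Φ r)) := by
  refine le_of_strictMono_interval _ (fun r hr1 hr2 => (A.rank_le _).1) ?_
  intro r hr1 hr2
  exact A.rank_strictMono (g.strictMono (A.faceAt_lt hr1 (by omega) (by omega)))

lemma smul_faceAt (g : Face ≃o Face) (Φ : Flag Face) {r : ℤ}
    (hr1 : -1 ≤ r) (hr2 : r ≤ (n : ℤ)) :
    A.faceAt (g • Φ) r = g (A.faceAt Φ r) := by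
  set s : ℤ := A.rank (g (A.faceAt Φ r)) with hs
  have hmem : g (A.faceAt Φ r) ∈ g • Φ := smul_mem_smul (A.faceAt_mem Φ r hr1 hr2)
  have heq : A.faceAt (g • Φ) s = g (A.faceAt Φ r) := A.faceAt_eq _ _ hmem
  have h1 : r ≤ s := A.rank_apply_faceAt_ge g Φ r hr1 hr2
  have h2 : s ≤ A.rank (g.symm (A.faceAt (g • Φ) s)) :=
    A.rank_apply_faceAt_ge g.symm (g • Φ) s (A.rank_le _).1 (A.rank_le _).2
  rw [heq, g.symm_apply_apply, A.faceAt_rank Φ r hr1 hr2] at h2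
  have : s = r := le_antisymm h2 h1
  rw [this] at heq
  exact heq

lemma rank_smul (g : Face ≃o Face) {Φ : Flag Face} {F : Face} (hF : F ∈ Φ) :
    A.rank (g F) = A.rank F := by
  have h := A.faceAt_eq Φ F hF
  have := A.smul_faceAt g Φ (r := A.rank F) (A.rank_le F).1 (A.rank_le F).2
  rw [h] at this
  rw [← this, A.faceAt_rank _ _ (A.rank_le F).1 (A.rank_le F).2]

lemma smul_adj (g : Face ≃o Face) (Φ : Flag Face) {i : ℕ} (hi : i < n) :
    g • A.adj Φ i = A.adj (g • Φ) i := by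
  refine A.adj_unique (g • Φ) (g • A.adj Φ i) i hi ?_ ?_
  · intro h
    exact A.adj_ne Φ i hi (smul_left_cancel g h)
  · intro F hF hrF
    obtain ⟨F', hF', rfl⟩ := mem_smul_iff.1 hF
    rw [A.rank_smul g hF'] at hrF
    exact smul_mem_smul (A.adj_mem Φ i hi F' hF' hrF)

lemma adj_adj (Φ : Flag Face) {i : ℕ} (hi : i < n) : A.adj (A.adj Φ i) i = Φ := by
  refine (A.adj_unique (A.adj Φ i) Φ i hi (Ne.symm (A.adj_ne Φ i hi)) ?_).symm
  intro F hF hrF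
  have h1 : -1 ≤ A.rank F := (A.rank_le F).1
  have h2 : A.rank F ≤ (n : ℤ) := (A.rank_le F).2
  have hG : A.faceAt Φ (A.rank F) ∈ Φ := A.faceAt_mem Φ _ h1 h2
  have hGr : A.rank (A.faceAt Φ (A.rank F)) = A.rank F := A.faceAt_rank Φ _ h1 h2
  have hGadj : A.faceAt Φ (A.rank F) ∈ A.adj Φ i :=
    A.adj_mem Φ i hi _ hG (by rw [hGr]; exact hrF)
  have e1 := A.faceAt_eq (A.adj Φ i) F hF
  have e2 := A.faceAt_eq (A.adj Φ i) _ hGadj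
  rw [hGr] at e2
  rw [← e1, e2]
  exact hG

lemma eq_one_of_smul_flag (A : AbstractPolytope n Face) (g : Face ≃o Face) (Φ : Flag Face) (hΦ : g • Φ = Φ) :
    g = 1 := by
  have hall : ∀ Ψ : Flag Face, g • Ψ = Ψ := by
    intro Ψ
    obtain ⟨l, c, hc0, hcl, hstep⟩ := A.connected Φ Ψ
    have key : ∀ m, m ≤ l → g • c m = c m := by
      intro m
      induction m with
      | zero => intro _; rw [hc0]; exact hΦ
      | succ m ih =>
        intro hm
        obtain ⟨i, hin, he, -⟩ := hstep m (by omega)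
        rw [he, A.smul_adj g (c m) hin, ih (by omega)]
    rw [← hcl]; exact key l le_rfl
  refine DFunLike.ext g 1 fun F => ?_
  obtain ⟨M, hM, hsub⟩ := (IsChain.singleton (r := (· ≤ ·)) (a := F)).exists_maxChain
  set Ψ : Flag Face := Flag.ofIsMaxChain M hM with hΨ
  have hFΨ : F ∈ Ψ := hsub rfl
  have hgF : g F ∈ Ψ := by
    have := smul_mem_smul (g := g) hFΨ
    rwa [hall Ψ] at this
  have hr : A.rank (g F) = A.rank F := A.rank_smul g hFΨ
  have e1 := A.faceAt_eq Ψ (g F) hgF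
  have e2 := A.faceAt_eq Ψ F hFΨ
  rw [hr, e2] at e1
  show g F = F
  exact e1.symm

lemma sameOrbit_refl (Φ : Flag Face) : SameOrbit Φ Φ := ⟨1, one_smul _ _⟩

lemma sameOrbit_symm {Φ Ψ : Flag Face} (h : SameOrbit Φ Ψ) : SameOrbit Ψ Φ := by
  obtain ⟨g, hg⟩ := h
  exact ⟨g⁻¹, by rw [← hg, inv_smul_smul]⟩

lemma sameOrbit_trans {Φ Ψ X : Flag Face} (h1 : SameOrbit Φ Ψ) (h2 : SameOrbit Ψ X) :
    SameOrbit Φ X := by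
  obtain ⟨g, hg⟩ := h1; obtain ⟨k, hk⟩ := h2
  exact ⟨k * g, by rw [mul_smul, hg, hk]⟩

lemma two_class (h2 : A.TwoOrbit) {a b : Flag Face} (c : Flag Face)
    (hab : ¬ SameOrbit a b) : SameOrbit c a ∨ SameOrbit c b := by
  obtain ⟨A0, B0, hAB, hall⟩ := h2
  rcases hall a with ha | ha <;> rcases hall b with hb | hb <;>
    rcases hall c with hc | hc
  · exact absurd (sameOrbit_trans ha (sameOrbit_symm hb)) hab
  · exact absurd (sameOrbit_trans ha (sameOrbit_symm hb)) hab
  · exact Or.inl (sameOrbit_trans hc (sameOrbit_symm ha))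
  · exact Or.inr (sameOrbit_trans hc (sameOrbit_symm hb))
  · exact Or.inr (sameOrbit_trans hc (sameOrbit_symm hb))
  · exact Or.inl (sameOrbit_trans hc (sameOrbit_symm ha))
  · exact absurd (sameOrbit_trans ha (sameOrbit_symm hb)) hab
  · exact absurd (sameOrbit_trans ha (sameOrbit_symm hb)) hab

lemma not_sameOrbit_adj (h2 : A.TwoOrbit) {I : Set ℕ} (hI : A.InClass I)
    {j : ℕ} (hj : j < n) (hjI : j ∉ I) :
    ∀ Ψ : Flag Face, ¬ SameOrbit Ψ (A.adj Ψ j) := by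
  by_contra hcon
  push_neg at hcon
  obtain ⟨Ψ, hΨ⟩ := hcon
  apply hjI
  rw [hI.2 j hj]
  obtain ⟨k, hk⟩ := hΨ
  have claim1 : ∀ X : Flag Face, SameOrbit Ψ X → SameOrbit X (A.adj X j) := by
    rintro X ⟨g, rfl⟩
    exact ⟨g * k * g⁻¹, by
      rw [mul_smul, mul_smul, inv_smul_smul, hk, A.smul_adj g Ψ hj]⟩
  intro X
  by_cases hXΨ : SameOrbit Ψ X
  · exact claim1 X hXΨ
  · rcases A.two_class h2 (A.adj X j) (fun h => hXΨ (sameOrbit_symm h)) with hYX | hYΨ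
    · exact sameOrbit_symm hYX
    · have := claim1 _ (sameOrbit_symm hYΨ)
      rw [A.adj_adj X hj] at this
      exact sameOrbit_symm this

lemma exists_not_mem (h2 : A.TwoOrbit) {I : Set ℕ} (hI : A.InClass I) :
    ∃ j : ℕ, j < n ∧ j ∉ I := by
  by_contra hcon
  push_neg at hcon
  obtain ⟨A0, B0, hAB, hall⟩ := h2
  apply hAB
  obtain ⟨l, c, hc0, hcl, hstep⟩ := A.connected A0 B0
  have key : ∀ m, m ≤ l → SameOrbit A0 (c m) := by
    intro m
    induction m with
    | zero => intro _; rw [hc0]; exact sameOrbit_refl _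
    | succ m ih =>
      intro hm
      obtain ⟨i, hin, he, -⟩ := hstep m (by omega)
      have hiI : i ∈ I := hcon i hin
      have := (hI.2 i hin).1 hiI (c m)
      rw [he]
      exact sameOrbit_trans (ih (by omega)) this
  rw [← hcl]; exact key l le_rfl

end AbstractPolytope

open AbstractPolytope in
/-- The distinguished generators `ρ_i` (`i ∈ I`), `α_{j,k}` (`j,k ∉ I`) and
`α_{j,i,j} = β j i` (`i ∈ I`, `j ∉ I`), determined by their action on the base flag `Φ`,
generate the full automorphism group `Γ(P)`. -/
theorem stmt7 {n : ℕ} {Face : Type*} [PartialOrder Face] (A : AbstractPolytope n Face)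
    (I : Set ℕ) (h2 : A.TwoOrbit) (hI : A.InClass I)
    (Φ : Flag Face)
    (ρ : ℕ → (Face ≃o Face)) (α : ℕ → ℕ → (Face ≃o Face)) (β : ℕ → ℕ → (Face ≃o Face))
    (hρ : ∀ i ∈ I, (ρ i) • Φ = A.adj Φ i)
    (hα : ∀ j k : ℕ, j < n → k < n → j ∉ I → k ∉ I →
        (α j k) • Φ = A.adj (A.adj Φ j) k)
    (hβ : ∀ j : ℕ, ∀ i ∈ I, j < n → j ∉ I →
        (β j i) • Φ = A.adj (A.adj (A.adj Φ j) i) j) :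
    Subgroup.closure
      ({x : Face ≃o Face | ∃ i ∈ I, x = ρ i}
        ∪ {x : Face ≃o Face | ∃ j k : ℕ, j < n ∧ k < n ∧ j ∉ I ∧ k ∉ I ∧ x = α j k}
        ∪ {x : Face ≃o Face | ∃ j : ℕ, ∃ i ∈ I, j < n ∧ j ∉ I ∧ x = β j i}) = ⊤ := by
  rw [eq_top_iff]
  intro g _
  set H : Subgroup (Face ≃o Face) := Subgroup.closure
      ({x : Face ≃o Face | ∃ i ∈ I, x = ρ i}
        ∪ {x : Face ≃o Face | ∃ j k : ℕ, j < n ∧ k < n ∧ j ∉ I ∧ k ∉ I ∧ x = α j k}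
        ∪ {x : Face ≃o Face | ∃ j : ℕ, ∃ i ∈ I, j < n ∧ j ∉ I ∧ x = β j i}) with hH
  have hρS : ∀ i ∈ I, ρ i ∈ H := fun i hi =>
    Subgroup.subset_closure (Or.inl (Or.inl ⟨i, hi, rfl⟩))
  have hαS : ∀ j k : ℕ, j < n → k < n → j ∉ I → k ∉ I → α j k ∈ H :=
    fun j k h1 h2 h3 h4 =>
      Subgroup.subset_closure (Or.inl (Or.inr ⟨j, k, h1, h2, h3, h4, rfl⟩))
  have hβS : ∀ j : ℕ, ∀ i ∈ I, j < n → j ∉ I → β j i ∈ H :=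
    fun j i hi h1 h2 => Subgroup.subset_closure (Or.inr ⟨j, i, hi, h1, h2, rfl⟩)
  obtain ⟨j0, hj0n, hj0I⟩ := A.exists_not_mem h2 hI
  obtain ⟨l, c, hc0, hcl, hstep⟩ := A.connected Φ (g • Φ)
  have key : ∀ m, m ≤ l →
      (∃ h ∈ H, h • Φ = c m) ∨ (∃ h ∈ H, h • Φ = A.adj (c m) j0) := by
    intro m
    induction m with
    | zero => exact fun _ => Or.inl ⟨1, one_mem _, by rw [one_smul, hc0]⟩
    | succ m ih =>
      intro hm
      obtain ⟨i, hin, he, -⟩ := hstep m (by omega)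
      rcases ih (by omega) with ⟨h, hmem, hhΦ⟩ | ⟨h, hmem, hhΦ⟩
      · by_cases hiI : i ∈ I
        · refine Or.inl ⟨h * ρ i, mul_mem hmem (hρS i hiI), ?_⟩
          rw [he, mul_smul, hρ i hiI, A.smul_adj h Φ hin, hhΦ]
        · refine Or.inr ⟨h * α i j0, mul_mem hmem (hαS i j0 hin hj0n hiI hj0I), ?_⟩
          rw [he, mul_smul, hα i j0 hin hj0n hiI hj0I,
            A.smul_adj h (A.adj Φ i) hj0n, A.smul_adj h Φ hin, hhΦ]
      · have hcm : c m = A.adj (h • Φ) j0 := by rw [hhΦ, A.adj_adj _ hj0n]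
        by_cases hiI : i ∈ I
        · refine Or.inr ⟨h * β j0 i, mul_mem hmem (hβS j0 i hiI hj0n hj0I), ?_⟩
          rw [he, hcm, mul_smul, hβ j0 i hiI hj0n hj0I,
            A.smul_adj h (A.adj (A.adj Φ j0) i) hj0n,
            A.smul_adj h (A.adj Φ j0) hin, A.smul_adj h Φ hj0n]
        · refine Or.inl ⟨h * α j0 i, mul_mem hmem (hαS j0 i hj0n hin hj0I hiI), ?_⟩
          rw [he, hcm, mul_smul, hα j0 i hj0n hin hj0I hiI,
            A.smul_adj h (A.adj Φ j0) hin, A.smul_adj h Φ hj0n]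
  rcases key l le_rfl with ⟨h, hmem, hhΦ⟩ | ⟨h, hmem, hhΦ⟩
  · rw [hcl] at hhΦ
    have h1 : h⁻¹ * g = 1 :=
      A.eq_one_of_smul_flag _ Φ (by rw [mul_smul, ← hhΦ, inv_smul_smul])
    have h2 : h = g := inv_mul_eq_one.mp h1
    exact h2 ▸ hmem
  · rw [hcl] at hhΦ
    refine absurd ⟨h * g⁻¹, ?_⟩ (A.not_sameOrbit_adj h2 hI hj0n hj0I (g • Φ))
    rw [mul_smul, inv_smul_smul, hhΦ]
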